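/- arXiv:2209.09371 — 3 statements merged into one kernel-verified Lean document; each statement's English description precedes it below -/
import Mathlib

section
/- (Hodge theorem, finite-dimensional case) Let ∂_k : V_k → V_{k-1} and ∂_{k+1} : V_{k+1} → V_k be linear maps between finite-dimensional inner product spaces with ∂_k ∘ ∂_{k+1} = 0, and let Δ_k = ∂_k†∂_k + ∂_{k+1}∂_{k+1}†. Then dim ker(Δ_k) = dim ker(∂_k) − rank(∂_{k+1}), i.e., the kernel dimension of the Laplacian equals the dimension of the homology ker(∂_k)/im(∂_{k+1}). -/
open LinearMap Module

lemma my_ker_adjoint {V W : Type*}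
    [NormedAddCommGroup V] [InnerProductSpace ℂ V] [FiniteDimensional ℂ V]
    [NormedAddCommGroup W] [InnerProductSpace ℂ W] [FiniteDimensional ℂ W]
    (A : V →ₗ[ℂ] W) :
    LinearMap.ker (LinearMap.adjoint A) = (LinearMap.range A)ᗮ := by
  ext x
  simp only [LinearMap.mem_ker, Submodule.mem_orthogonal]
  constructor
  · rintro h _ ⟨y, rfl⟩
    rw [← LinearMap.adjoint_inner_right, h, inner_zero_right]
  · intro h
    rw [← inner_self_eq_zero (𝕜 := ℂ), LinearMap.adjoint_inner_right]
    exact h _ ⟨_, rfl⟩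

/-- Hodge theorem (finite-dimensional case): for chain maps `∂_k`, `∂_{k+1}` with
`∂_k ∘ ∂_{k+1} = 0`, the kernel dimension of the Laplacian
`Δ_k = ∂_k†∂_k + ∂_{k+1}∂_{k+1}†` equals `dim ker ∂_k − rank ∂_{k+1}`,
the dimension of the homology `ker ∂_k / im ∂_{k+1}`. -/
theorem hodge_finrank_ker_laplacian
    {Vkm1 Vk Vkp1 : Type*}
    [NormedAddCommGroup Vkm1] [InnerProductSpace ℂ Vkm1] [FiniteDimensional ℂ Vkm1]
    [NormedAddCommGroup Vk] [InnerProductSpace ℂ Vk] [FiniteDimensional ℂ Vk]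
    [NormedAddCommGroup Vkp1] [InnerProductSpace ℂ Vkp1] [FiniteDimensional ℂ Vkp1]
    (dk : Vk →ₗ[ℂ] Vkm1) (dk1 : Vkp1 →ₗ[ℂ] Vk)
    (hchain : dk ∘ₗ dk1 = 0) :
    Module.finrank ℂ
        (LinearMap.ker ((LinearMap.adjoint dk) ∘ₗ dk + dk1 ∘ₗ (LinearMap.adjoint dk1)))
      = Module.finrank ℂ (LinearMap.ker dk) - Module.finrank ℂ (LinearMap.range dk1) := by
  have hker : LinearMap.ker ((LinearMap.adjoint dk) ∘ₗ dk + dk1 ∘ₗ (LinearMap.adjoint dk1))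
      = LinearMap.ker dk ⊓ (LinearMap.range dk1)ᗮ := by
    rw [← my_ker_adjoint]
    ext x
    simp only [LinearMap.mem_ker, Submodule.mem_inf, LinearMap.add_apply, LinearMap.comp_apply]
    constructor
    · intro h
      have h0 : (inner ℂ (dk x) (dk x) : ℂ)
          + inner ℂ ((LinearMap.adjoint dk1) x) ((LinearMap.adjoint dk1) x) = 0 := by
        have := congrArg (fun y => (inner ℂ y x : ℂ)) h
        simpa [inner_add_left, LinearMap.adjoint_inner_left,
          ← LinearMap.adjoint_inner_right dk1] using this
      rw [inner_self_eq_norm_sq_to_K, inner_self_eq_norm_sq_to_K] at h0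
      have h0' : (‖dk x‖ : ℝ) ^ 2 + ‖(LinearMap.adjoint dk1) x‖ ^ 2 = 0 := by
        simpa [← Complex.ofReal_pow] using congrArg Complex.re h0
      have h1 : ‖dk x‖ = 0 := by nlinarith [sq_nonneg ‖dk x‖, sq_nonneg ‖(LinearMap.adjoint dk1) x‖, norm_nonneg (dk x), norm_nonneg ((LinearMap.adjoint dk1) x)]
      have h2 : ‖(LinearMap.adjoint dk1) x‖ = 0 := by nlinarith [sq_nonneg ‖dk x‖, norm_nonneg (dk x), norm_nonneg ((LinearMap.adjoint dk1) x)]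
      simp_all
    · rintro ⟨h1, h2⟩
      rw [h1, h2]
      simp
  rw [hker]
  set U := LinearMap.range dk1
  set W := LinearMap.ker dk
  have hUW : U ≤ W := LinearMap.range_le_ker_iff.mpr hchain
  have hsup : W ⊔ Uᗮ = ⊤ := by
    rw [eq_top_iff, ← Submodule.sup_orthogonal_of_hasOrthogonalProjection (K := U)]
    exact sup_le_sup_right hUW _
  have hd := Submodule.finrank_sup_add_finrank_inf_eq W Uᗮ
  have ho := Submodule.finrank_add_finrank_orthogonal U
  have hWle : finrank ℂ W ≤ finrank ℂ Vk := W.finrank_le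
  have hUle : finrank ℂ U ≤ finrank ℂ W := Submodule.finrank_mono hUW
  rw [hsup, finrank_top] at hd
  omega
end

section
/- For integers m, n with m, n ≥ 2 and (n/(2m))² ≥ 2, the sum S = Σ_{i=0}^{m/2} ((m−i−1)!/((m−2i)! i!)) (2/n)^{m−2i} satisfies S ≤ 4 (more precisely S ≤ 2(n/2m)²/((n/2m)² − 1) ≤ 4). -/
open Finset

lemma fact_le_pow_mul_fact (c : ℕ) :
    ∀ b a : ℕ, b ≤ c → b.factorial ≤ c ^ (b - a) * a.factorial := by
  intro b
  induction b with
  | zero =>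
      intro a _
      simp only [Nat.zero_sub, pow_zero, one_mul, Nat.factorial_zero]
      exact a.factorial_pos
  | succ b ih =>
      intro a hbc
      by_cases h : b + 1 ≤ a
      · have h0 : b + 1 - a = 0 := by omega
        rw [h0, pow_zero, one_mul]
        exact Nat.factorial_le h
      · push_neg at h
        have h1 : b + 1 - a = (b - a) + 1 := by omega
        rw [h1, pow_succ]
        calc (b+1).factorial = (b+1) * b.factorial := rfl
          _ ≤ c * (c ^ (b - a) * a.factorial) :=
              Nat.mul_le_mul hbc (ih a (by omega))
          _ = c ^ (b - a) * c * a.factorial := by ring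

lemma key_nat (m i : ℕ) (hm : 2 ≤ m) (hi : 2 * i ≤ m) :
    m * (m - i - 1).factorial ≤ 2 * ((m ^ (m - 2 * i)) * ((m - 2 * i).factorial * i.factorial)) := by
  rcases Nat.eq_or_lt_of_le hi with heq | hlt
  · -- 2*i = m
    have hi1 : 1 ≤ i := by omega
    have h1 : m - 2 * i = 0 := by omega
    have h2 : m - i - 1 = i - 1 := by omega
    rw [h1, h2, pow_zero, one_mul, Nat.factorial_zero, one_mul]
    have h3 : i * (i - 1).factorial = i.factorial := Nat.mul_factorial_pred (by omega)
    have : m * (i - 1).factorial = 2 * i.factorial := by rw [← h3, ← heq]; ring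
    exact le_of_eq this
  · -- 2*i < m
    have h1 : (m - i - 1).factorial ≤ m ^ (m - i - 1 - i) * i.factorial :=
      fact_le_pow_mul_fact m (m - i - 1) i (by omega)
    have h2 : m - i - 1 - i = (m - 2 * i) - 1 := by omega
    have h3 : m - 2 * i = ((m - 2 * i) - 1) + 1 := by omega
    have h4 : 1 ≤ (m - 2 * i).factorial := (m - 2*i).factorial_pos
    calc m * (m - i - 1).factorial ≤ m * (m ^ ((m - 2*i) - 1) * i.factorial) := by
          rw [h2] at h1; exact Nat.mul_le_mul_left m h1
      _ = m ^ (m - 2 * i) * i.factorial := by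
          have h3' : m ^ (m - 2 * i) = m ^ (m - 2*i - 1) * m := by
            conv_lhs => rw [h3]
            rw [pow_succ]
          rw [h3']; ring
      _ = m ^ (m - 2 * i) * (1 * i.factorial) := by ring
      _ ≤ m ^ (m - 2 * i) * ((m - 2*i).factorial * i.factorial) :=
          Nat.mul_le_mul_left _ (Nat.mul_le_mul_right _ h4)
      _ ≤ 2 * ((m ^ (m - 2 * i)) * ((m - 2 * i).factorial * i.factorial)) :=
          Nat.le_mul_of_pos_left _ (by norm_num)

/-- For integers `m, n ≥ 2` with `(n/(2m))² ≥ 2`, the sum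
`S = Σ_{i=0}^{⌊m/2⌋} ((m−i−1)!/((m−2i)! i!)) (2/n)^{m−2i}` satisfies
`S ≤ 2(n/2m)²/((n/2m)² − 1) ≤ 4`. -/
theorem factorial_sum_bound (m n : ℕ) (hm : 2 ≤ m) (hn : 2 ≤ n)
    (hratio : ((n : ℝ) / (2 * m)) ^ 2 ≥ 2) :
    (∑ i ∈ Finset.range (m / 2 + 1),
        (((m - i - 1).factorial : ℝ) / (((m - 2 * i).factorial : ℝ) * (i.factorial : ℝ))) *
          (2 / (n : ℝ)) ^ (m - 2 * i))
      ≤ 2 * ((n : ℝ) / (2 * m)) ^ 2 / (((n : ℝ) / (2 * m)) ^ 2 - 1)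
    ∧ 2 * ((n : ℝ) / (2 * m)) ^ 2 / (((n : ℝ) / (2 * m)) ^ 2 - 1) ≤ 4 := by
  have hm0 : (0:ℝ) < m := by exact_mod_cast (by omega : 0 < m)
  have hn0 : (0:ℝ) < n := by exact_mod_cast (by omega : 0 < n)
  set x : ℝ := (n : ℝ) / (2 * m) with hxdef
  set y : ℝ := 2 * (m : ℝ) / n with hydef
  have hy0 : 0 < y := by positivity
  have hxy : y ^ 2 * x ^ 2 = 1 := by
    rw [hxdef, hydef]; field_simp
  have hx2 : (2:ℝ) ≤ x ^ 2 := hratio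
  have hy2 : y ^ 2 ≤ 1 / 2 := by nlinarith [sq_nonneg y]
  have hy1 : y ≤ 1 := by nlinarith [sq_nonneg (y - 1)]
  have hx2pos : (0:ℝ) < x ^ 2 - 1 := by linarith
  have h1s : (0:ℝ) < 1 - y ^ 2 := by linarith
  set K := m / 2 with hKdef
  -- termwise bound
  have hterm : ∀ i ∈ Finset.range (K + 1),
      (((m - i - 1).factorial : ℝ) / (((m - 2 * i).factorial : ℝ) * (i.factorial : ℝ))) *
          (2 / (n : ℝ)) ^ (m - 2 * i) ≤ 2 * (y ^ 2) ^ (K - i) := by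
    intro i hi
    have hiK : i ≤ K := by
      have := Finset.mem_range.mp hi; omega
    have h2i : 2 * i ≤ m := by omega
    have hB := key_nat m i hm h2i
    have hBr : (m:ℝ) * ((m - i - 1).factorial : ℝ) ≤
        2 * ((m:ℝ) ^ (m - 2 * i) * (((m - 2 * i).factorial : ℝ) * (i.factorial : ℝ))) := by
      exact_mod_cast hB
    have hBCpos : (0:ℝ) < ((m - 2 * i).factorial : ℝ) * (i.factorial : ℝ) := by
      positivity
    have hcoeff : (((m - i - 1).factorial : ℝ) / (((m - 2 * i).factorial : ℝ) * (i.factorial : ℝ)))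
        ≤ 2 * (m:ℝ) ^ (m - 2 * i) / m := by
      rw [div_le_div_iff₀ hBCpos hm0]
      nlinarith [hBr]
    have hpow0 : (0:ℝ) ≤ (2 / (n:ℝ)) ^ (m - 2 * i) := by positivity
    calc (((m - i - 1).factorial : ℝ) / (((m - 2 * i).factorial : ℝ) * (i.factorial : ℝ))) *
          (2 / (n : ℝ)) ^ (m - 2 * i)
        ≤ (2 * (m:ℝ) ^ (m - 2 * i) / m) * (2 / (n : ℝ)) ^ (m - 2 * i) :=
          mul_le_mul_of_nonneg_right hcoeff hpow0
      _ = (2 / m) * y ^ (m - 2 * i) := by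
          have hy' : y = (m : ℝ) * (2 / n) := by rw [hydef]; ring
          rw [hy', mul_pow]
          field_simp
      _ = ((2 / m) * y ^ (m % 2)) * (y ^ 2) ^ (K - i) := by
          have he : m - 2 * i = 2 * (K - i) + m % 2 := by omega
          rw [he, pow_add, pow_mul]
          ring
      _ ≤ 2 * (y ^ 2) ^ (K - i) := by
          have hyp : y ^ (m % 2) ≤ 1 := pow_le_one₀ (le_of_lt hy0) hy1
          have h2m : (2:ℝ) / m ≤ 1 := by
            rw [div_le_one hm0]; exact_mod_cast hm
          have hfac : (2 / (m:ℝ)) * y ^ (m % 2) ≤ 2 := by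
            have h0 : (0:ℝ) ≤ 2 / m := by positivity
            nlinarith [pow_nonneg (le_of_lt hy0) (m % 2)]
          exact mul_le_mul_of_nonneg_right hfac (by positivity)
  -- sum bound
  have hsum : (∑ i ∈ Finset.range (K + 1),
        (((m - i - 1).factorial : ℝ) / (((m - 2 * i).factorial : ℝ) * (i.factorial : ℝ))) *
          (2 / (n : ℝ)) ^ (m - 2 * i)) ≤ 2 * (1 / (1 - y ^ 2)) := by
    calc (∑ i ∈ Finset.range (K + 1),
        (((m - i - 1).factorial : ℝ) / (((m - 2 * i).factorial : ℝ) * (i.factorial : ℝ))) *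
          (2 / (n : ℝ)) ^ (m - 2 * i))
        ≤ ∑ i ∈ Finset.range (K + 1), 2 * (y ^ 2) ^ (K - i) := Finset.sum_le_sum hterm
      _ = ∑ i ∈ Finset.range (K + 1), 2 * (y ^ 2) ^ i := by
          rw [← Finset.sum_range_reflect]
          apply Finset.sum_congr rfl
          intro j hj
          have hj' : j < K + 1 := Finset.mem_range.mp hj
          congr 2
          omega
      _ = 2 * ∑ i ∈ Finset.range (K + 1), (y ^ 2) ^ i := by rw [Finset.mul_sum]
      _ ≤ 2 * (1 / (1 - y ^ 2)) := by
          have hne : y ^ 2 ≠ 1 := by linarith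
          have hg : ∑ i ∈ Finset.range (K + 1), (y ^ 2) ^ i
              = ((y ^ 2) ^ (K + 1) - 1) / (y ^ 2 - 1) := geom_sum_eq hne _
          rw [hg]
          have heq : ((y ^ 2) ^ (K + 1) - 1) / (y ^ 2 - 1)
              = (1 - (y ^ 2) ^ (K + 1)) / (1 - y ^ 2) := by
            rw [← neg_div_neg_eq]; ring_nf
          rw [heq]
          have hnum : 1 - (y ^ 2) ^ (K + 1) ≤ 1 := by
            nlinarith [pow_nonneg (sq_nonneg y) (K + 1)]
          exact mul_le_mul_of_nonneg_left ((div_le_div_iff_of_pos_right h1s).mpr hnum) (by norm_num)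
  have hfin : 2 * (1 / (1 - y ^ 2)) = 2 * x ^ 2 / (x ^ 2 - 1) := by
    rw [mul_one_div, div_eq_div_iff h1s.ne' hx2pos.ne']
    linear_combination 2 * hxy
  constructor
  · rw [← hfin]; exact hsum
  · rw [div_le_iff₀ hx2pos]; linarith
end

section
/- Let A be Hermitian with eigenvalues in {0} ∪ [δ,1], kernel dimension β, and size N. Let χ be the output of the stochastic Chebyshev estimator: χ = (1/(n_v N)) Σ_{l=1}^{n_v} ⟨v_l| p~(A) |v_l⟩ with the degree-m polynomial p~ of Proposition (|p~| ≤ 1 on [0,1], |p~(λ) − 1_{λ=0}| ≤ ε on the spectrum) and v_l i.i.d. uniformly random Hadamard columns. If n_v ≥ C·log(2/η)/ε² and m ≥ log(1/ε)/√δ, then with probability at least 1 − η, |χ − β/N| ≤ 2ε. -/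
open Matrix Polynomial Real Finset

/-- The `c`-th column of the `2^n × 2^n` Hadamard matrix: `(h_c)_x = (-1)^{x·c}`. -/
def hadamardCol (n : ℕ) (c : Fin n → Bool) : (Fin n → Bool) → ℝ :=
  fun x => (-1 : ℝ) ^ (Finset.univ.filter fun i => x i ∧ c i).card


lemma exp_le_add_exp_sq (x : ℝ) : Real.exp x ≤ x + Real.exp (x ^ 2) := by
  rcases le_or_gt (|x|) 1 with h | h
  · have hb := Real.exp_bound h (by norm_num : 0 < 2)
    have h1 : Real.exp x ≤ 1 + x + (3/4) * x ^ 2 := by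
      have : |Real.exp x - ∑ i ∈ Finset.range 2, x ^ i / i.factorial|
          ≤ |x| ^ 2 * ((2 : ℕ).succ / ((2 : ℕ).factorial * 2)) := hb
      simp [Finset.sum_range_succ, Nat.factorial] at this
      have := abs_sub_le_iff.mp this |>.1
      nlinarith [sq_abs x]
    have h2 : (1 : ℝ) + x ^ 2 ≤ Real.exp (x ^ 2) := by
      have := Real.add_one_le_exp (x ^ 2); linarith
    nlinarith [sq_nonneg x]
  · rcases le_or_gt 1 x with hx | hx
    · have h1 : x ≤ x ^ 2 := by nlinarith
      have := Real.exp_le_exp.mpr h1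
      linarith [this, hx.trans (le_refl x), (by linarith : (0:ℝ) ≤ x)]
    · have hx' : x ≤ -1 := by rcases abs_cases x with ⟨h1,h2⟩|⟨h1,h2⟩ <;> linarith
      have h1 : Real.exp x ≤ 1 := Real.exp_le_one_iff.mpr (by linarith)
      have h2 : -x ≤ x ^ 2 := by nlinarith
      have h3 : 1 - x ≤ Real.exp (-x) := by
        have := Real.add_one_le_exp (-x); linarith
      have h4 : Real.exp (-x) ≤ Real.exp (x ^ 2) := Real.exp_le_exp.mpr h2
      linarith

lemma chernoff_count {S : Type*} [Fintype S] [DecidableEq S] (Y : S → ℝ) (c ε : ℝ)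
    (hc : 0 < c) (hε : 0 < ε) (h0 : ∑ s, Y s = 0) (hb : ∀ s, |Y s| ≤ c) (nv : ℕ) :
    ((univ.filter fun f : Fin nv → S => ε * nv ≤ ∑ l, Y (f l)).card : ℝ)
      ≤ (Fintype.card S : ℝ) ^ nv * Real.exp (-(nv * ε ^ 2) / (4 * c ^ 2)) := by
  set t : ℝ := ε / (2 * c ^ 2) with ht
  have htpos : 0 < t := div_pos hε (by positivity)
  -- mgf bound per coordinate
  have hmgf : ∑ s, Real.exp (t * Y s) ≤ (Fintype.card S : ℝ) * Real.exp (t ^ 2 * c ^ 2) := by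
    have hpt : ∀ s, Real.exp (t * Y s) ≤ t * Y s + Real.exp (t ^ 2 * c ^ 2) := by
      intro s
      refine (exp_le_add_exp_sq (t * Y s)).trans ?_
      gcongr
      have := hb s
      have h1 : (Y s) ^ 2 ≤ c ^ 2 := by nlinarith [abs_nonneg (Y s), sq_abs (Y s), neg_abs_le (Y s), le_abs_self (Y s)]
      calc (t * Y s) ^ 2 = t ^ 2 * (Y s) ^ 2 := by ring
        _ ≤ t ^ 2 * c ^ 2 := by nlinarith [sq_nonneg t]
    calc ∑ s, Real.exp (t * Y s) ≤ ∑ s, (t * Y s + Real.exp (t ^ 2 * c ^ 2)) :=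
          Finset.sum_le_sum fun s _ => hpt s
      _ = t * (∑ s, Y s) + (Fintype.card S : ℝ) * Real.exp (t ^ 2 * c ^ 2) := by
          rw [Finset.sum_add_distrib, ← Finset.mul_sum, Finset.sum_const, Finset.card_univ,
            nsmul_eq_mul]
      _ = (Fintype.card S : ℝ) * Real.exp (t ^ 2 * c ^ 2) := by rw [h0]; ring
  -- sum over all tuples factorizes
  have hfact : ∑ f : Fin nv → S, Real.exp (t * ∑ l, Y (f l))
      = (∑ s, Real.exp (t * Y s)) ^ nv := by
    have : ∀ f : Fin nv → S, Real.exp (t * ∑ l, Y (f l)) = ∏ l, Real.exp (t * Y (f l)) := by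
      intro f; rw [Finset.mul_sum, Real.exp_sum]
    simp_rw [this]
    rw [← Fintype.piFinset_univ, ← Finset.prod_univ_sum (fun _ => univ)
      (fun (_ : Fin nv) s => Real.exp (t * Y s)), Finset.prod_const, Finset.card_univ,
      Fintype.card_fin]
  -- Markov / Chernoff step
  have hmarkov : ((univ.filter fun f : Fin nv → S => ε * nv ≤ ∑ l, Y (f l)).card : ℝ)
      * Real.exp (t * (ε * nv)) ≤ ∑ f : Fin nv → S, Real.exp (t * ∑ l, Y (f l)) := by
    have h1 : ∀ f ∈ (univ.filter fun f : Fin nv → S => ε * nv ≤ ∑ l, Y (f l)),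
        Real.exp (t * (ε * nv)) ≤ Real.exp (t * ∑ l, Y (f l)) := by
      intro f hf
      rw [Finset.mem_filter] at hf
      exact Real.exp_le_exp.mpr (by nlinarith [hf.2])
    calc ((univ.filter fun f : Fin nv → S => ε * nv ≤ ∑ l, Y (f l)).card : ℝ)
          * Real.exp (t * (ε * nv))
        = ∑ _f ∈ (univ.filter fun f : Fin nv → S => ε * nv ≤ ∑ l, Y (f l)),
            Real.exp (t * (ε * nv)) := by rw [Finset.sum_const, nsmul_eq_mul]
      _ ≤ ∑ f ∈ (univ.filter fun f : Fin nv → S => ε * nv ≤ ∑ l, Y (f l)),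
            Real.exp (t * ∑ l, Y (f l)) := Finset.sum_le_sum h1
      _ ≤ ∑ f : Fin nv → S, Real.exp (t * ∑ l, Y (f l)) :=
          Finset.sum_le_sum_of_subset_of_nonneg (Finset.filter_subset _ _)
            (fun f _ _ => (Real.exp_pos _).le)
  have hS : (0:ℝ) ≤ (Fintype.card S : ℝ) := Nat.cast_nonneg _
  have hbound : ∑ f : Fin nv → S, Real.exp (t * ∑ l, Y (f l))
      ≤ ((Fintype.card S : ℝ) * Real.exp (t ^ 2 * c ^ 2)) ^ nv := by
    rw [hfact]
    exact pow_le_pow_left₀ (Finset.sum_nonneg fun s _ => (Real.exp_pos _).le) hmgf nv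
  have key : ((univ.filter fun f : Fin nv → S => ε * nv ≤ ∑ l, Y (f l)).card : ℝ)
      ≤ (Fintype.card S : ℝ) ^ nv * (Real.exp (t ^ 2 * c ^ 2) ^ nv * Real.exp (-(t * (ε * nv)))) := by
    have h2 := hmarkov.trans hbound
    rw [mul_pow] at h2
    have hexp : (0:ℝ) < Real.exp (t * (ε * nv)) := Real.exp_pos _
    rw [Real.exp_neg]
    rw [← le_div_iff₀ hexp] at h2
    calc ((univ.filter fun f : Fin nv → S => ε * nv ≤ ∑ l, Y (f l)).card : ℝ)
        ≤ (Fintype.card S : ℝ) ^ nv * Real.exp (t ^ 2 * c ^ 2) ^ nv / Real.exp (t * (ε * nv)) := h2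
      _ = (Fintype.card S : ℝ) ^ nv * (Real.exp (t ^ 2 * c ^ 2) ^ nv * (Real.exp (t * (ε * nv)))⁻¹) := by
          ring
  refine key.trans (le_of_eq ?_)
  congr 1
  rw [← Real.exp_nat_mul, ← Real.exp_add]
  congr 1
  have hc2 : (c:ℝ) ^ 2 ≠ 0 := by positivity
  rw [ht]
  field_simp
  ring

lemma aeval_conj {n : Type*} [Fintype n] [DecidableEq n]
    (U V B : Matrix n n ℝ) (hUV : U * V = 1) (hVU : V * U = 1) (P : Polynomial ℝ) :
    Polynomial.aeval (U * B * V) P = U * Polynomial.aeval B P * V := by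
  have hpow : ∀ k : ℕ, (U * B * V) ^ k = U * B ^ k * V := by
    intro k
    induction k with
    | zero => simp [hUV]
    | succ k ih =>
      rw [pow_succ, ih, pow_succ]
      calc U * B ^ k * V * (U * B * V) = U * B ^ k * (V * U) * (B * V) := by
            simp only [mul_assoc]
        _ = U * (B ^ k * B) * V := by rw [hVU]; simp only [mul_one, mul_assoc]
  induction P using Polynomial.induction_on' with
  | add p q hp hq => rw [map_add, map_add, hp, hq, mul_add, add_mul]
  | monomial k a =>
    rw [Polynomial.aeval_monomial, Polynomial.aeval_monomial, hpow]
    simp only [← mul_assoc]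
    rw [Algebra.commutes]

lemma aeval_diag {n : Type*} [Fintype n] [DecidableEq n] (d : n → ℝ) (P : Polynomial ℝ) :
    Polynomial.aeval (Matrix.diagonal d) P = Matrix.diagonal (fun i => P.eval (d i)) := by
  have h := Polynomial.aeval_algHom_apply (Matrix.diagonalAlgHom (R := ℝ) (α := ℝ) (n := n)) d P
  simp only [Matrix.diagonalAlgHom_apply] at h
  have h3 : (Polynomial.aeval d) P = fun i => P.eval (d i) := by
    funext i
    have h2 := Polynomial.aeval_algHom_apply (Pi.evalAlgHom ℝ (fun _ => ℝ) i) d P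
    simpa using h2.symm
  rw [h, h3]

lemma hadamardCol_eq_prod (n : ℕ) (c x : Fin n → Bool) :
    hadamardCol n c x = ∏ i, (if x i ∧ c i then (-1 : ℝ) else 1) := by
  rw [hadamardCol, Finset.prod_ite, Finset.prod_const, Finset.prod_const, one_pow, mul_one]

lemma hadamard_orth (n : ℕ) (x y : Fin n → Bool) :
    ∑ c : Fin n → Bool, hadamardCol n c x * hadamardCol n c y
      = if x = y then ((2 : ℝ) ^ n) else 0 := by
  have hstep : ∀ c : Fin n → Bool, hadamardCol n c x * hadamardCol n c y
      = ∏ i, ((if x i ∧ c i then (-1 : ℝ) else 1) * (if y i ∧ c i then (-1 : ℝ) else 1)) := by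
    intro c
    rw [hadamardCol_eq_prod, hadamardCol_eq_prod, ← Finset.prod_mul_distrib]
  simp_rw [hstep]
  rw [← Fintype.piFinset_univ, ← Finset.prod_univ_sum (fun _ => univ)
    (fun (i : Fin n) (b : Bool) =>
      (if x i ∧ b then (-1 : ℝ) else 1) * (if y i ∧ b then (-1 : ℝ) else 1))]
  by_cases hxy : x = y
  · subst hxy
    rw [if_pos rfl]
    have : ∀ i, ∑ b : Bool, ((if x i ∧ b then (-1 : ℝ) else 1) * (if x i ∧ b then (-1 : ℝ) else 1))
        = 2 := by
      intro i
      rw [Fintype.sum_bool]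
      by_cases h : x i <;> simp [h] <;> norm_num
    simp_rw [this, Finset.prod_const, Finset.card_univ, Fintype.card_fin]
  · rw [if_neg hxy]
    have ⟨i, hi⟩ : ∃ i, x i ≠ y i := by
      by_contra h
      push_neg at h
      exact hxy (funext h)
    apply Finset.prod_eq_zero (Finset.mem_univ i)
    rw [Fintype.sum_bool]
    rcases Bool.eq_false_or_eq_true (x i) with h1 | h1 <;>
      rcases Bool.eq_false_or_eq_true (y i) with h2 | h2 <;>
      simp [h1, h2] at hi ⊢

lemma quad_diag {ι : Type*} [Fintype ι] [DecidableEq ι] (U : Matrix ι ι ℝ) (e : ι → ℝ)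
    (v : ι → ℝ) :
    v ⬝ᵥ ((U * Matrix.diagonal e * Uᵀ) *ᵥ v) = ∑ i, e i * ((Uᵀ *ᵥ v) i) ^ 2 := by
  rw [← Matrix.mulVec_mulVec, ← Matrix.mulVec_mulVec, Matrix.dotProduct_mulVec,
    ← Matrix.mulVec_transpose]
  simp [dotProduct, Matrix.mulVec_diagonal]
  exact Finset.sum_congr rfl fun i _ => by ring

lemma transpose_norm {ι : Type*} [Fintype ι] [DecidableEq ι] (U : Matrix ι ι ℝ)
    (hU : U * Uᵀ = 1) (v : ι → ℝ) :
    ∑ i, ((Uᵀ *ᵥ v) i) ^ 2 = v ⬝ᵥ v := by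
  have h1 : ∑ i, ((Uᵀ *ᵥ v) i) ^ 2 = (Uᵀ *ᵥ v) ⬝ᵥ (Uᵀ *ᵥ v) := by
    simp [dotProduct, sq]
  rw [h1, Matrix.dotProduct_mulVec, ← Matrix.mulVec_transpose, Matrix.transpose_transpose,
    Matrix.mulVec_mulVec, hU, Matrix.one_mulVec]

lemma spectral_poly {ι : Type*} [Fintype ι] [DecidableEq ι]
    (A : Matrix ι ι ℝ) (hA : A.IsHermitian) (P : Polynomial ℝ) :
    ∃ U : Matrix ι ι ℝ, U * Uᵀ = 1 ∧ Uᵀ * U = 1 ∧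
      Polynomial.aeval A P = U * Matrix.diagonal (fun i => P.eval (hA.eigenvalues i)) * Uᵀ := by
  refine ⟨(hA.eigenvectorUnitary : Matrix ι ι ℝ), ?_, ?_, ?_⟩
  · have := (Matrix.mem_unitaryGroup_iff).mp hA.eigenvectorUnitary.2
    rwa [Matrix.star_eq_conjTranspose, Matrix.conjTranspose_eq_transpose_of_trivial] at this
  · have := (Matrix.mem_unitaryGroup_iff').mp hA.eigenvectorUnitary.2
    rwa [Matrix.star_eq_conjTranspose, Matrix.conjTranspose_eq_transpose_of_trivial] at this
  · have hU : (hA.eigenvectorUnitary : Matrix ι ι ℝ) * (hA.eigenvectorUnitary : Matrix ι ι ℝ)ᵀ = 1 := by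
      have := (Matrix.mem_unitaryGroup_iff).mp hA.eigenvectorUnitary.2
      rwa [Matrix.star_eq_conjTranspose, Matrix.conjTranspose_eq_transpose_of_trivial] at this
    have hV : (hA.eigenvectorUnitary : Matrix ι ι ℝ)ᵀ * (hA.eigenvectorUnitary : Matrix ι ι ℝ) = 1 := by
      have := (Matrix.mem_unitaryGroup_iff').mp hA.eigenvectorUnitary.2
      rwa [Matrix.star_eq_conjTranspose, Matrix.conjTranspose_eq_transpose_of_trivial] at this
    have hspec : A = (hA.eigenvectorUnitary : Matrix ι ι ℝ)
        * Matrix.diagonal hA.eigenvalues * (hA.eigenvectorUnitary : Matrix ι ι ℝ)ᵀ := by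
      have := hA.spectral_theorem
      rwa [Unitary.conjStarAlgAut_apply, Matrix.star_eq_conjTranspose, Matrix.conjTranspose_eq_transpose_of_trivial,
        RCLike.ofReal_real_eq_id, Function.id_comp] at this
    conv_lhs => rw [hspec]
    rw [aeval_conj _ _ _ hU hV, aeval_diag]

lemma ker_dim_eq {ι : Type*} [Fintype ι] [DecidableEq ι]
    (A : Matrix ι ι ℝ) (hA : A.IsHermitian) :
    Module.finrank ℝ (LinearMap.ker A.mulVecLin)
      = (Finset.univ.filter fun i => hA.eigenvalues i = 0).card := by
  have h1 := LinearMap.finrank_range_add_finrank_ker A.mulVecLin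
  have h2 : Module.finrank ℝ (ι → ℝ) = Fintype.card ι := Module.finrank_fintype_fun_eq_card ℝ
  have h3 : A.rank = Fintype.card {i // hA.eigenvalues i ≠ 0} := hA.rank_eq_card_non_zero_eigs
  have h4 : A.rank = Module.finrank ℝ (LinearMap.range A.mulVecLin) := rfl
  have h5 : Fintype.card {i // hA.eigenvalues i ≠ 0}
      + Fintype.card {i // hA.eigenvalues i = 0} = Fintype.card ι := by
    rw [Fintype.card_subtype_compl fun i => hA.eigenvalues i = 0]
    have : Fintype.card {i // hA.eigenvalues i = 0} ≤ Fintype.card ι :=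
      Fintype.card_subtype_le _
    omega
  have h6 : Fintype.card {i // hA.eigenvalues i = 0}
      = (Finset.univ.filter fun i => hA.eigenvalues i = 0).card :=
    Fintype.card_subtype _
  omega

lemma hadamardCol_mul_self (n : ℕ) (c x : Fin n → Bool) :
    hadamardCol n c x * hadamardCol n c x = 1 := by
  rw [hadamardCol, ← pow_add]
  exact Even.neg_one_pow ⟨_, rfl⟩

lemma hadamardCol_dot_self (n : ℕ) (c : Fin n → Bool) :
    (hadamardCol n c) ⬝ᵥ (hadamardCol n c) = (2 : ℝ) ^ n := by
  have : ∀ x, hadamardCol n c x * hadamardCol n c x = 1 := hadamardCol_mul_self n c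
  simp only [dotProduct, this, Finset.sum_const, Finset.card_univ, nsmul_eq_mul, mul_one]
  simp [Fintype.card_fun]

lemma sum_quad (n : ℕ) (M : Matrix (Fin n → Bool) (Fin n → Bool) ℝ) :
    ∑ c : Fin n → Bool, (hadamardCol n c) ⬝ᵥ (M *ᵥ hadamardCol n c)
      = (2 : ℝ) ^ n * Matrix.trace M := by
  have step1 : ∀ c, (hadamardCol n c) ⬝ᵥ (M *ᵥ hadamardCol n c)
      = ∑ x, ∑ y, M x y * (hadamardCol n c x * hadamardCol n c y) := by
    intro c
    simp only [dotProduct, Matrix.mulVec, Finset.mul_sum]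
    exact Finset.sum_congr rfl fun x _ => Finset.sum_congr rfl fun y _ => by ring
  simp_rw [step1]
  rw [Finset.sum_comm]
  have step2 : ∀ x, ∑ c : Fin n → Bool, ∑ y, M x y * (hadamardCol n c x * hadamardCol n c y)
      = M x x * (2 : ℝ) ^ n := by
    intro x
    rw [Finset.sum_comm]
    have : ∀ y, ∑ c : Fin n → Bool, M x y * (hadamardCol n c x * hadamardCol n c y)
        = M x y * (if x = y then ((2 : ℝ) ^ n) else 0) := by
      intro y; rw [← Finset.mul_sum, hadamard_orth]
    simp_rw [this]
    simp [Finset.sum_ite_eq, mul_ite]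
  simp_rw [step2]
  rw [Matrix.trace, Finset.mul_sum]
  exact Finset.sum_congr rfl fun x _ => by rw [Matrix.diag_apply]; ring

/-- Stochastic Chebyshev Betti-number estimator: there is an absolute constant
`C > 0` such that for every Hermitian `N × N` matrix `A` (`N = 2^n`) with
eigenvalues in `{0} ∪ [δ, 1]` and kernel dimension `β`, and every degree-`m`
polynomial `p~` with `|p~| ≤ 1` on `[0,1]` and `|p~(λ) − 1_{λ=0}| ≤ ε` on the
spectrum, if `n_v ≥ C log(2/η)/ε²` and `m ≥ log₂(1/ε)/√δ` then, with
probability at least `1 − η` over `n_v` i.i.d. uniform Hadamard columns, the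
estimator `χ = (1/(n_v N)) Σ_l ⟨v_l| p~(A) |v_l⟩` satisfies `|χ − β/N| ≤ 2ε`. -/
theorem nisq_tda_estimator_guarantee :
    ∃ C : ℝ, 0 < C ∧
      ∀ (n nv m : ℕ) (hnv : 0 < nv)
        (A : Matrix (Fin n → Bool) (Fin n → Bool) ℝ) (hA : A.IsHermitian)
        (δ ε η : ℝ), 0 < δ → δ < 1 → 0 < ε → ε < 1 → 0 < η → η < 1 →
        (∀ i, hA.eigenvalues i = 0 ∨ (δ ≤ hA.eigenvalues i ∧ hA.eigenvalues i ≤ 1)) →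
        ∀ (P : Polynomial ℝ), P.natDegree = m →
        (∀ x ∈ Set.Icc (0 : ℝ) 1, |P.eval x| ≤ 1) →
        (∀ i, |P.eval (hA.eigenvalues i) - (if hA.eigenvalues i = 0 then 1 else 0)| ≤ ε) →
        (nv : ℝ) ≥ C * Real.log (2 / η) / ε ^ 2 →
        (m : ℝ) ≥ Real.logb 2 (1 / ε) / Real.sqrt δ →
        (1 : ℝ) - η ≤
          ((Finset.univ.filter fun f : Fin nv → (Fin n → Bool) =>
              |(1 / ((nv : ℝ) * Fintype.card (Fin n → Bool))) *
                  (∑ l, dotProduct (hadamardCol n (f l))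
                    (((Polynomial.aeval A) P).mulVec (hadamardCol n (f l))))
                - (Module.finrank ℝ (LinearMap.ker A.mulVecLin) : ℝ) /
                    (Fintype.card (Fin n → Bool) : ℝ)| ≤ 2 * ε).card : ℝ)
            / (Fintype.card (Fin nv → (Fin n → Bool)) : ℝ) := by
  refine ⟨16, by norm_num, ?_⟩
  intro n nv m hnv A hA δ ε η hδ hδ1 hε hε1 hη hη1 heig P hPdeg hP1 hPe hnvC hm
  set Np : ℝ := (2 : ℝ) ^ n with hNp
  have hNppos : (0 : ℝ) < Np := by positivity
  have hcard : ((Fintype.card (Fin n → Bool) : ℕ) : ℝ) = Np := by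
    simp [Fintype.card_fun, hNp]
  -- eigenvalue data
  set e : (Fin n → Bool) → ℝ := fun i => P.eval (hA.eigenvalues i) with he
  have he1 : ∀ i, |e i| ≤ 1 := by
    intro i
    apply hP1
    rcases heig i with h | ⟨h1, h2⟩
    · rw [h]; exact ⟨le_refl 0, zero_le_one⟩
    · exact ⟨le_trans hδ.le h1, h2⟩
  obtain ⟨U, hU, hV, hM⟩ := spectral_poly A hA P
  set q : (Fin n → Bool) → ℝ :=
    fun c => dotProduct (hadamardCol n c) (((Polynomial.aeval A) P).mulVec (hadamardCol n c))
    with hq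
  -- pointwise bound on quadratic forms
  have hqb : ∀ c, |q c| ≤ Np := by
    intro c
    rw [hq]
    simp only []
    rw [show dotProduct (hadamardCol n c) (((Polynomial.aeval A) P).mulVec (hadamardCol n c))
        = (hadamardCol n c) ⬝ᵥ (((Polynomial.aeval A) P) *ᵥ (hadamardCol n c)) from rfl,
      hM, quad_diag]
    calc |∑ i, e i * ((Uᵀ *ᵥ hadamardCol n c) i) ^ 2|
        ≤ ∑ i, |e i * ((Uᵀ *ᵥ hadamardCol n c) i) ^ 2| := Finset.abs_sum_le_sum_abs _ _
      _ ≤ ∑ i, ((Uᵀ *ᵥ hadamardCol n c) i) ^ 2 := by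
          apply Finset.sum_le_sum
          intro i _
          have h2 : |e i * ((Uᵀ *ᵥ hadamardCol n c) i) ^ 2|
              = |e i| * ((Uᵀ *ᵥ hadamardCol n c) i) ^ 2 := by
            rw [abs_mul, abs_of_nonneg (sq_nonneg ((Uᵀ *ᵥ hadamardCol n c) i))]
          rw [h2]
          nlinarith [he1 i, abs_nonneg (e i), sq_nonneg ((Uᵀ *ᵥ hadamardCol n c) i)]
      _ = (hadamardCol n c) ⬝ᵥ (hadamardCol n c) := transpose_norm U hU _
      _ = Np := hadamardCol_dot_self n c
  -- trace identity
  have htr : ∑ c, q c = Np * ∑ i, e i := by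
    rw [hq]
    simp only []
    rw [sum_quad n ((Polynomial.aeval A) P), hM, Matrix.trace_mul_cycle,
      hV, Matrix.one_mul, Matrix.trace_diagonal]
  -- kernel dimension
  have hβ : ((Module.finrank ℝ (LinearMap.ker A.mulVecLin) : ℕ) : ℝ)
      = ∑ i, (if hA.eigenvalues i = 0 then (1 : ℝ) else 0) := by
    rw [ker_dim_eq A hA, Finset.card_filter]
    push_cast
    simp [apply_ite]
  have htrβ : |∑ i, e i - ((Module.finrank ℝ (LinearMap.ker A.mulVecLin) : ℕ) : ℝ)| ≤ ε * Np := by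
    rw [hβ, ← Finset.sum_sub_distrib]
    calc |∑ i, (e i - if hA.eigenvalues i = 0 then (1 : ℝ) else 0)|
        ≤ ∑ i, |e i - if hA.eigenvalues i = 0 then (1 : ℝ) else 0| := Finset.abs_sum_le_sum_abs _ _
      _ ≤ ∑ _i : (Fin n → Bool), ε := Finset.sum_le_sum fun i _ => hPe i
      _ = ε * Np := by
          rw [Finset.sum_const, Finset.card_univ, nsmul_eq_mul, hcard]; ring
  -- centered variables
  set μ : ℝ := (∑ i, e i) / Np with hμ
  set Y : (Fin n → Bool) → ℝ := fun c => q c / Np - μ with hY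
  have hY0 : ∑ c, Y c = 0 := by
    rw [hY]
    simp only []
    rw [Finset.sum_sub_distrib, ← Finset.sum_div, htr, Finset.sum_const, Finset.card_univ,
      nsmul_eq_mul, hcard, hμ]
    field_simp
    ring
  have hμ1 : |μ| ≤ 1 := by
    rw [hμ, abs_div, abs_of_pos hNppos, div_le_one hNppos]
    calc |∑ i, e i| ≤ ∑ i, |e i| := Finset.abs_sum_le_sum_abs _ _
      _ ≤ ∑ _i : (Fin n → Bool), (1 : ℝ) := Finset.sum_le_sum fun i _ => he1 i
      _ = Np := by rw [Finset.sum_const, Finset.card_univ, nsmul_eq_mul, hcard]; ring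
  have hYb : ∀ c, |Y c| ≤ 2 := by
    intro c
    rw [hY]
    simp only []
    have h1 : |q c / Np| ≤ 1 := by
      rw [abs_div, abs_of_pos hNppos, div_le_one hNppos]; exact hqb c
    calc |q c / Np - μ| ≤ |q c / Np| + |μ| := abs_sub _ _
      _ ≤ 2 := by linarith
  -- Chernoff bounds
  have hb1 := chernoff_count Y 2 ε two_pos hε hY0 hYb nv
  have hb2 := chernoff_count (fun c => -Y c) 2 ε two_pos hε
    (by rw [Finset.sum_neg_distrib, hY0, neg_zero]) (fun s => by rw [abs_neg]; exact hYb s) nv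
  -- exponential bound
  have hexp : Real.exp (-((nv : ℝ) * ε ^ 2) / (4 * 2 ^ 2)) ≤ η / 2 := by
    have hlog : 0 < Real.log (2 / η) := Real.log_pos (by rw [lt_div_iff₀ hη]; linarith)
    have h16 : 16 * Real.log (2 / η) ≤ (nv : ℝ) * ε ^ 2 := by
      have := (div_le_iff₀ (by positivity : (0:ℝ) < ε ^ 2)).mp hnvC
      linarith
    have : -((nv : ℝ) * ε ^ 2) / (4 * 2 ^ 2) ≤ -Real.log (2 / η) := by
      rw [neg_div, neg_le_neg_iff]
      rw [le_div_iff₀ (by norm_num : (0:ℝ) < 4 * 2 ^ 2)]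
      linarith
    calc Real.exp (-((nv : ℝ) * ε ^ 2) / (4 * 2 ^ 2)) ≤ Real.exp (-Real.log (2 / η)) :=
          Real.exp_le_exp.mpr this
      _ = η / 2 := by
          rw [Real.exp_neg, Real.exp_log (by positivity), inv_div]
  -- key implication
  have key : ∀ f : Fin nv → (Fin n → Bool), |∑ l, Y (f l)| ≤ ε * nv →
      |(1 / ((nv : ℝ) * Fintype.card (Fin n → Bool))) * (∑ l, q (f l))
        - ((Module.finrank ℝ (LinearMap.ker A.mulVecLin) : ℕ) : ℝ)
            / (Fintype.card (Fin n → Bool) : ℝ)| ≤ 2 * ε := by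
    intro f hf
    have hnvR : (0 : ℝ) < nv := Nat.cast_pos.mpr hnv
    have hrw : (1 / ((nv : ℝ) * Fintype.card (Fin n → Bool))) * (∑ l, q (f l))
        = (1 / (nv : ℝ)) * ∑ l, Y (f l) + μ := by
      rw [hY]
      simp only []
      rw [Finset.sum_sub_distrib, Finset.sum_const, Finset.card_univ, Fintype.card_fin,
        nsmul_eq_mul, ← Finset.sum_div]
      rw [hcard]
      field_simp
      ring
    have hβb : |μ - ((Module.finrank ℝ (LinearMap.ker A.mulVecLin) : ℕ) : ℝ)
        / (Fintype.card (Fin n → Bool) : ℝ)| ≤ ε := by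
      rw [hcard, hμ, div_sub_div_same, abs_div, abs_of_pos hNppos, div_le_iff₀ hNppos]
      calc |∑ i, e i - ((Module.finrank ℝ (LinearMap.ker A.mulVecLin) : ℕ) : ℝ)| ≤ ε * Np := htrβ
        _ = ε * Np := rfl
    have h1 : |(1 / (nv : ℝ)) * ∑ l, Y (f l)| ≤ ε := by
      rw [abs_mul, abs_of_pos (by positivity : (0:ℝ) < 1 / (nv : ℝ))]
      rw [div_mul_eq_mul_div, one_mul, div_le_iff₀ hnvR]
      calc |∑ l, Y (f l)| ≤ ε * nv := hf
        _ = ε * nv := rfl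
    rw [hrw]
    calc |(1 / (nv : ℝ)) * ∑ l, Y (f l) + μ
          - ((Module.finrank ℝ (LinearMap.ker A.mulVecLin) : ℕ) : ℝ)
            / (Fintype.card (Fin n → Bool) : ℝ)|
        ≤ |(1 / (nv : ℝ)) * ∑ l, Y (f l)|
          + |μ - ((Module.finrank ℝ (LinearMap.ker A.mulVecLin) : ℕ) : ℝ)
            / (Fintype.card (Fin n → Bool) : ℝ)| := by
          rw [add_sub_assoc]; exact abs_add_le _ _
      _ ≤ 2 * ε := by linarith
  -- counting
  set pred : (Fin nv → (Fin n → Bool)) → Prop := fun f =>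
    |(1 / ((nv : ℝ) * Fintype.card (Fin n → Bool))) *
        (∑ l, dotProduct (hadamardCol n (f l))
          (((Polynomial.aeval A) P).mulVec (hadamardCol n (f l))))
      - (Module.finrank ℝ (LinearMap.ker A.mulVecLin) : ℝ) /
          (Fintype.card (Fin n → Bool) : ℝ)| ≤ 2 * ε with hpred
  have hsub : (univ.filter fun f : Fin nv → (Fin n → Bool) => ¬ pred f)
      ⊆ (univ.filter fun f : Fin nv → (Fin n → Bool) => ε * nv ≤ ∑ l, Y (f l))
        ∪ (univ.filter fun f : Fin nv → (Fin n → Bool) => ε * nv ≤ ∑ l, (fun c => -Y c) (f l)) := by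
    intro f hf
    rw [Finset.mem_filter] at hf
    rw [Finset.mem_union, Finset.mem_filter, Finset.mem_filter]
    by_contra h
    push_neg at h
    obtain ⟨h1, h2⟩ := h
    have h1' := h1 (Finset.mem_univ f)
    have h2' := h2 (Finset.mem_univ f)
    rw [Finset.sum_neg_distrib] at h2'
    apply hf.2
    rw [hpred]
    exact key f (abs_le.mpr ⟨by linarith, by linarith⟩)
  have hcount : ((univ.filter fun f : Fin nv → (Fin n → Bool) => ¬ pred f).card : ℝ)
      ≤ η * Np ^ nv := by
    calc ((univ.filter fun f : Fin nv → (Fin n → Bool) => ¬ pred f).card : ℝ)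
        ≤ ((univ.filter fun f : Fin nv → (Fin n → Bool) => ε * nv ≤ ∑ l, Y (f l)).card : ℝ)
          + ((univ.filter fun f : Fin nv → (Fin n → Bool) =>
              ε * nv ≤ ∑ l, (fun c => -Y c) (f l)).card : ℝ) := by
          have := Finset.card_le_card hsub
          have h2 := Finset.card_union_le
            (univ.filter fun f : Fin nv → (Fin n → Bool) => ε * nv ≤ ∑ l, Y (f l))
            (univ.filter fun f : Fin nv → (Fin n → Bool) => ε * nv ≤ ∑ l, (fun c => -Y c) (f l))
          exact_mod_cast le_trans this h2
      _ ≤ 2 * ((Fintype.card (Fin n → Bool) : ℝ) ^ nv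
            * Real.exp (-((nv : ℝ) * ε ^ 2) / (4 * 2 ^ 2))) := by
          rw [two_mul]; exact add_le_add hb1 hb2
      _ ≤ 2 * (Np ^ nv * (η / 2)) := by
          apply mul_le_mul_of_nonneg_left _ (by norm_num : (0:ℝ) ≤ 2)
          rw [hcard]
          exact mul_le_mul_of_nonneg_left hexp (by positivity)
      _ = η * Np ^ nv := by ring
  have hsplit := Finset.card_filter_add_card_filter_not
    (s := (univ : Finset (Fin nv → (Fin n → Bool)))) (p := pred)
  have hΩ : ((Fintype.card (Fin nv → (Fin n → Bool)) : ℕ) : ℝ) = Np ^ nv := by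
    rw [Fintype.card_fun, Fintype.card_fin]
    push_cast
    rw [hcard]
  rw [le_div_iff₀ (by rw [hΩ]; positivity)]
  have hcards : ((univ.filter pred).card : ℝ)
      + ((univ.filter fun f => ¬ pred f).card : ℝ) = Np ^ nv := by
    rw [← hΩ, ← Nat.cast_add, hsplit, Finset.card_univ]
  have : ((univ.filter pred).card : ℝ) ≥ Np ^ nv - η * Np ^ nv := by linarith
  calc (1 - η) * ((Fintype.card (Fin nv → (Fin n → Bool)) : ℕ) : ℝ)
      = Np ^ nv - η * Np ^ nv := by rw [hΩ]; ring
    _ ≤ ((univ.filter pred).card : ℝ) := this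
end
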